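/- Let d₁, d₂ ≥ 2 be integers, t* > 0, and let η̂ : [0, t*] → ℝ⁵ be continuous and satisfy ∫₀^{t*} (4·C(d₁, d₂, η̂(s)) + 1) ds ≤ 500. Suppose F : [0, t*] → ℝ⁵ is continuous, and μ : [0, t*] → ℝ⁵ is continuous with μ(0) = 0, differentiable on (0, t*], and satisfies μ'(t) = (1/t)·L_{d₁d₂}·μ(t) + 2·B_{d₁d₂}(η̂(t), μ(t)) + F(t) for all t ∈ (0, t*]. Then sup_{t ∈ [0,t*]} |μ(t)| ≤ e²⁵⁰ · (∫₀^{t*} |F(s)|² ds)^{1/2}. -/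

import Mathlib

noncomputable section

/-- The 5×5 matrix `L_{d₁d₂}`: zero except `(L)₂₂ = −d₂`, `(L)₃₂ = 2`, `(L)₃₃ = −2`
(rows and columns indexed 1,…,5; here indexed `0,…,4`). -/
def Lmat (d₁ d₂ : ℕ) : Matrix (Fin 5) (Fin 5) ℝ :=
  Matrix.of fun i j =>
    if i = 1 ∧ j = 1 then -(d₂ : ℝ)
    else if i = 2 ∧ j = 1 then 2
    else if i = 2 ∧ j = 2 then -2
    else 0

/-- The action of `L_{d₁d₂}` on `ℝ⁵` (with the Euclidean norm). -/
def Lop (d₁ d₂ : ℕ) (x : EuclideanSpace ℝ (Fin 5)) : EuclideanSpace ℝ (Fin 5) :=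
  WithLp.toLp 2 ((Lmat d₁ d₂).mulVec x)

/-- The symmetric bilinear map `B_{d₁d₂} : ℝ⁵ × ℝ⁵ → ℝ⁵` (coordinates indexed `0,…,4`,
corresponding to the paper's indices `1,…,5`). -/
def Bmap (d₁ d₂ : ℕ) (x y : EuclideanSpace ℝ (Fin 5)) : EuclideanSpace ℝ (Fin 5) :=
  WithLp.toLp 2 ![-(1 / (2 * (d₁:ℝ))) * (x 1 * y 3 + x 3 * y 1 + x 0 * y 1 + x 1 * y 0),
    -(1/2 : ℝ) * (x 1 * y 2 + x 2 * y 1)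
      + (d₁:ℝ) * (x 0 * y 0 + x 3 * y 3 + x 0 * y 3 + x 3 * y 0) - (d₁:ℝ) * (x 4 * y 4),
    -(1 / (d₂:ℝ)) * (x 2 * y 2) + (1 / (d₂:ℝ)) * (x 1 * y 2 + x 2 * y 1)
      - (1/(d₁:ℝ) + 1/(d₂:ℝ)) * (x 1 * y 1) - x 4 * y 4,
    0, 0]

/-- The constant `C(d₁, d₂, y)` from Lemma `Btermok`. -/
def Cconst (d₁ d₂ : ℕ) (y : EuclideanSpace ℝ (Fin 5)) : ℝ :=
  |y 0| * ((d₁:ℝ) + 1 / (4 * (d₁:ℝ)))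
    + |y 1| * (1 / (2 * (d₁:ℝ)) + 3 / (2 * (d₂:ℝ)) + 1/4)
    + |y 2| * (1 / (2 * (d₂:ℝ)) + 1/2)
    + |y 3| * ((d₁:ℝ) + 1 / (4 * (d₁:ℝ)))
    + |y 4| * (((d₁:ℝ) + 1) / 2)

set_option maxHeartbeats 1000000

open scoped RealInnerProductSpace

lemma inner_L_nonpos (d₁ d₂ : ℕ) (hd₂ : 2 ≤ d₂) (x : EuclideanSpace ℝ (Fin 5)) :
    ⟪Lop d₁ d₂ x, x⟫ ≤ 0 := by
  have h2 : (2:ℝ) ≤ (d₂:ℝ) := by exact_mod_cast hd₂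
  simp only [Lop, Lmat, PiLp.inner_apply, RCLike.inner_apply, conj_trivial,
    Matrix.mulVec, dotProduct, Fin.sum_univ_five, Matrix.of_apply, PiLp.toLp_apply]
  simp (config := { decide := true }) only [Fin.isValue, if_true, if_false]
  ring_nf
  nlinarith [sq_nonneg (x 1 - x 2), sq_nonneg (x 1), sq_nonneg (x 2)]

lemma inner_B_le (d₁ d₂ : ℕ) (hd₁ : 2 ≤ d₁) (hd₂ : 2 ≤ d₂) (e x : EuclideanSpace ℝ (Fin 5)) :
    ⟪Bmap d₁ d₂ e x, x⟫ ≤ Cconst d₁ d₂ e * ⟪x, x⟫ := by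
  have hA : (2:ℝ) ≤ (d₁:ℝ) := by exact_mod_cast hd₁
  have hB : (2:ℝ) ≤ (d₂:ℝ) := by exact_mod_cast hd₂
  set A := (d₁:ℝ) with hAdef
  set B := (d₂:ℝ) with hBdef
  have hA0 : (0:ℝ) < A := by linarith
  have hB0 : (0:ℝ) < B := by linarith
  set a := 1/A with ha
  set b := 1/B with hb
  have ha0 : 0 < a := by positivity
  have hb0 : 0 < b := by positivity
  have ha2 : a ≤ 1/2 := by rw [ha, div_le_div_iff₀ hA0 (by norm_num : (0:ℝ) < 2)]; linarith
  have hb2 : b ≤ 1/2 := by rw [hb, div_le_div_iff₀ hB0 (by norm_num : (0:ℝ) < 2)]; linarith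
  have hs : ⟪x, x⟫ = x 0^2 + x 1^2 + x 2^2 + x 3^2 + x 4^2 := by
    simp only [PiLp.inner_apply, RCLike.inner_apply, conj_trivial, Fin.sum_univ_five]; ring
  have hC : Cconst d₁ d₂ e = |e 0| *(A + a/4) + |e 1| *(a/2 + 3*b/2 + 1/4)
      + |e 2| *(b/2 + 1/2) + |e 3| *(A + a/4) + |e 4| *((A+1)/2) := by
    have c1 : 1/(4*A) = a/4 := by rw [ha]; field_simp
    have c2 : 1/(2*A) = a/2 := by rw [ha]; field_simp
    have c3 : 3/(2*B) = 3*b/2 := by rw [hb]; field_simp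
    have c4 : 1/(2*B) = b/2 := by rw [hb]; field_simp
    simp only [Cconst, ← hAdef, ← hBdef, c1, c2, c3, c4]
  have hBx : ⟪Bmap d₁ d₂ e x, x⟫ =
      e 0 * ((A - a/2)*(x 0*x 1) + A*(x 1*x 3))
      + e 1 * (-(a/2)*(x 0*x 3 + x 0^2) - (1/2 + a + b)*(x 1*x 2) + b*(x 2^2))
      + e 2 * (-(1/2)*(x 1^2) - b*(x 2^2) + b*(x 1*x 2))
      + e 3 * ((A - a/2)*(x 0*x 1) + A*(x 1*x 3))
      + e 4 * (-A*(x 1*x 4) - x 2*x 4) := by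
    simp only [Bmap, PiLp.inner_apply, RCLike.inner_apply, conj_trivial, Fin.sum_univ_five,
      Matrix.cons_val_zero, Matrix.cons_val_one, Matrix.head_cons,
      Matrix.cons_val_two, Matrix.cons_val_three, Matrix.cons_val_four, Matrix.tail_cons, PiLp.toLp_apply,
      ← hAdef, ← hBdef]
    have c2 : 1/(2*A) = a/2 := by rw [ha]; field_simp
    have c5 : 1/A = a := ha.symm
    have c6 : 1/B = b := hb.symm
    rw [c2, c5, c6]
    ring
  have key : ∀ c M K : ℝ, |M| ≤ K → c * M ≤ |c| * K := by
    intro c M K h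
    calc c * M ≤ |c * M| := le_abs_self _
    _ = |c| * |M| := abs_mul _ _
    _ ≤ |c| * K := mul_le_mul_of_nonneg_left h (abs_nonneg _)
  have hE0 : |(A - a/2)*(x 0*x 1) + A*(x 1*x 3)| ≤ (A + a/4) * (x 0^2 + x 1^2 + x 2^2 + x 3^2 + x 4^2) := by
    rw [abs_le]
    constructor <;>
    linarith [mul_nonneg hA0.le (sq_nonneg (x 0)), mul_nonneg hA0.le (sq_nonneg (x 1)),
      mul_nonneg hA0.le (sq_nonneg (x 2)), mul_nonneg hA0.le (sq_nonneg (x 3)),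
      mul_nonneg hA0.le (sq_nonneg (x 4)),
      mul_nonneg ha0.le (sq_nonneg (x 0)), mul_nonneg ha0.le (sq_nonneg (x 1)),
      mul_nonneg ha0.le (sq_nonneg (x 2)), mul_nonneg ha0.le (sq_nonneg (x 3)),
      mul_nonneg ha0.le (sq_nonneg (x 4)),
      mul_nonneg hb0.le (sq_nonneg (x 0)), mul_nonneg hb0.le (sq_nonneg (x 1)),
      mul_nonneg hb0.le (sq_nonneg (x 2)), mul_nonneg hb0.le (sq_nonneg (x 3)),
      mul_nonneg hb0.le (sq_nonneg (x 4)),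
      sq_nonneg (x 0), sq_nonneg (x 1), sq_nonneg (x 2), sq_nonneg (x 3), sq_nonneg (x 4), mul_nonneg (show (0:ℝ) ≤ A - a/2 by linarith) (sq_nonneg (x 0 + x 1)),
      mul_nonneg (show (0:ℝ) ≤ A - a/2 by linarith) (sq_nonneg (x 0 - x 1)),
      mul_nonneg hA0.le (sq_nonneg (x 1 + x 3)), mul_nonneg hA0.le (sq_nonneg (x 1 - x 3)),
      mul_nonneg (show (0:ℝ) ≤ A + a/4 by linarith) (sq_nonneg (x 2)),
      mul_nonneg (show (0:ℝ) ≤ A + a/4 by linarith) (sq_nonneg (x 4)),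
      mul_nonneg ha0.le (sq_nonneg (x 0)), mul_nonneg ha0.le (sq_nonneg (x 1)),
      mul_nonneg ha0.le (sq_nonneg (x 3))]
  have hE1 : |(-(a/2)*(x 0*x 3 + x 0^2) - (1/2 + a + b)*(x 1*x 2) + b*(x 2^2))|
      ≤ (a/2 + 3*b/2 + 1/4) * (x 0^2 + x 1^2 + x 2^2 + x 3^2 + x 4^2) := by
    rw [abs_le]
    constructor <;>
    linarith [mul_nonneg hA0.le (sq_nonneg (x 0)), mul_nonneg hA0.le (sq_nonneg (x 1)),
      mul_nonneg hA0.le (sq_nonneg (x 2)), mul_nonneg hA0.le (sq_nonneg (x 3)),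
      mul_nonneg hA0.le (sq_nonneg (x 4)),
      mul_nonneg ha0.le (sq_nonneg (x 0)), mul_nonneg ha0.le (sq_nonneg (x 1)),
      mul_nonneg ha0.le (sq_nonneg (x 2)), mul_nonneg ha0.le (sq_nonneg (x 3)),
      mul_nonneg ha0.le (sq_nonneg (x 4)),
      mul_nonneg hb0.le (sq_nonneg (x 0)), mul_nonneg hb0.le (sq_nonneg (x 1)),
      mul_nonneg hb0.le (sq_nonneg (x 2)), mul_nonneg hb0.le (sq_nonneg (x 3)),
      mul_nonneg hb0.le (sq_nonneg (x 4)),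
      sq_nonneg (x 0), sq_nonneg (x 1), sq_nonneg (x 2), sq_nonneg (x 3), sq_nonneg (x 4), mul_nonneg (show (0:ℝ) ≤ 1 - a by linarith) (sq_nonneg (x 0)), mul_nonneg ha0.le (sq_nonneg (x 0 + x 3)), mul_nonneg ha0.le (sq_nonneg (x 0 - x 3)),
      mul_nonneg (show (0:ℝ) ≤ 1/2 + a + b by linarith) (sq_nonneg (x 1 + x 2)),
      mul_nonneg (show (0:ℝ) ≤ 1/2 + a + b by linarith) (sq_nonneg (x 1 - x 2)),
      mul_nonneg ha0.le (sq_nonneg (x 0)), mul_nonneg ha0.le (sq_nonneg (x 3)),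
      mul_nonneg hb0.le (sq_nonneg (x 1)), mul_nonneg hb0.le (sq_nonneg (x 2)),
      mul_nonneg hb0.le (sq_nonneg (x 0)), mul_nonneg hb0.le (sq_nonneg (x 3)),
      mul_nonneg hb0.le (sq_nonneg (x 4)), mul_nonneg ha0.le (sq_nonneg (x 4)),
      sq_nonneg (x 0), sq_nonneg (x 1), sq_nonneg (x 2), sq_nonneg (x 3), sq_nonneg (x 4)]
  have hE2 : |(-(1/2)*(x 1^2) - b*(x 2^2) + b*(x 1*x 2))| ≤ (b/2 + 1/2) * (x 0^2 + x 1^2 + x 2^2 + x 3^2 + x 4^2) := by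
    rw [abs_le]
    constructor <;>
    linarith [mul_nonneg hA0.le (sq_nonneg (x 0)), mul_nonneg hA0.le (sq_nonneg (x 1)),
      mul_nonneg hA0.le (sq_nonneg (x 2)), mul_nonneg hA0.le (sq_nonneg (x 3)),
      mul_nonneg hA0.le (sq_nonneg (x 4)),
      mul_nonneg ha0.le (sq_nonneg (x 0)), mul_nonneg ha0.le (sq_nonneg (x 1)),
      mul_nonneg ha0.le (sq_nonneg (x 2)), mul_nonneg ha0.le (sq_nonneg (x 3)),
      mul_nonneg ha0.le (sq_nonneg (x 4)),
      mul_nonneg hb0.le (sq_nonneg (x 0)), mul_nonneg hb0.le (sq_nonneg (x 1)),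
      mul_nonneg hb0.le (sq_nonneg (x 2)), mul_nonneg hb0.le (sq_nonneg (x 3)),
      mul_nonneg hb0.le (sq_nonneg (x 4)),
      sq_nonneg (x 0), sq_nonneg (x 1), sq_nonneg (x 2), sq_nonneg (x 3), sq_nonneg (x 4), mul_nonneg (show (0:ℝ) ≤ 1 - 2*b by linarith) (sq_nonneg (x 2)), mul_nonneg hb0.le (sq_nonneg (x 1 + x 2)), mul_nonneg hb0.le (sq_nonneg (x 1 - x 2)),
      mul_nonneg hb0.le (sq_nonneg (x 0)), mul_nonneg hb0.le (sq_nonneg (x 3)),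
      mul_nonneg hb0.le (sq_nonneg (x 4)),
      sq_nonneg (x 0), sq_nonneg (x 1), sq_nonneg (x 2), sq_nonneg (x 3), sq_nonneg (x 4)]
  have hE4 : |(-A*(x 1*x 4) - x 2*x 4)| ≤ ((A+1)/2) * (x 0^2 + x 1^2 + x 2^2 + x 3^2 + x 4^2) := by
    rw [abs_le]
    constructor <;>
    linarith [mul_nonneg hA0.le (sq_nonneg (x 0)), mul_nonneg hA0.le (sq_nonneg (x 1)),
      mul_nonneg hA0.le (sq_nonneg (x 2)), mul_nonneg hA0.le (sq_nonneg (x 3)),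
      mul_nonneg hA0.le (sq_nonneg (x 4)),
      mul_nonneg ha0.le (sq_nonneg (x 0)), mul_nonneg ha0.le (sq_nonneg (x 1)),
      mul_nonneg ha0.le (sq_nonneg (x 2)), mul_nonneg ha0.le (sq_nonneg (x 3)),
      mul_nonneg ha0.le (sq_nonneg (x 4)),
      mul_nonneg hb0.le (sq_nonneg (x 0)), mul_nonneg hb0.le (sq_nonneg (x 1)),
      mul_nonneg hb0.le (sq_nonneg (x 2)), mul_nonneg hb0.le (sq_nonneg (x 3)),
      mul_nonneg hb0.le (sq_nonneg (x 4)),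
      sq_nonneg (x 0), sq_nonneg (x 1), sq_nonneg (x 2), sq_nonneg (x 3), sq_nonneg (x 4), mul_nonneg hA0.le (sq_nonneg (x 1 + x 4)), mul_nonneg hA0.le (sq_nonneg (x 1 - x 4)),
      sq_nonneg (x 2 + x 4), sq_nonneg (x 2 - x 4),
      mul_nonneg hA0.le (sq_nonneg (x 0)), mul_nonneg hA0.le (sq_nonneg (x 2)),
      mul_nonneg hA0.le (sq_nonneg (x 3)),
      sq_nonneg (x 0), sq_nonneg (x 1), sq_nonneg (x 2), sq_nonneg (x 3), sq_nonneg (x 4)]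
  have b0 := key (e 0) _ _ hE0
  have b1 := key (e 1) _ _ hE1
  have b2 := key (e 2) _ _ hE2
  have b3 := key (e 3) _ _ hE0
  have b4 := key (e 4) _ _ hE4
  rw [hBx, hC, hs]
  linarith [mul_nonneg hA0.le (sq_nonneg (x 0)), mul_nonneg hA0.le (sq_nonneg (x 1)),
      mul_nonneg hA0.le (sq_nonneg (x 2)), mul_nonneg hA0.le (sq_nonneg (x 3)),
      mul_nonneg hA0.le (sq_nonneg (x 4)),
      mul_nonneg ha0.le (sq_nonneg (x 0)), mul_nonneg ha0.le (sq_nonneg (x 1)),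
      mul_nonneg ha0.le (sq_nonneg (x 2)), mul_nonneg ha0.le (sq_nonneg (x 3)),
      mul_nonneg ha0.le (sq_nonneg (x 4)),
      mul_nonneg hb0.le (sq_nonneg (x 0)), mul_nonneg hb0.le (sq_nonneg (x 1)),
      mul_nonneg hb0.le (sq_nonneg (x 2)), mul_nonneg hb0.le (sq_nonneg (x 3)),
      mul_nonneg hb0.le (sq_nonneg (x 4)),
      sq_nonneg (x 0), sq_nonneg (x 1), sq_nonneg (x 2), sq_nonneg (x 3), sq_nonneg (x 4), b0, b1, b2, b3, b4]

lemma Cconst_cont (d₁ d₂ : ℕ) : Continuous (fun y : EuclideanSpace ℝ (Fin 5) => Cconst d₁ d₂ y) := by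
  unfold Cconst
  have h : ∀ i : Fin 5, Continuous (fun y : EuclideanSpace ℝ (Fin 5) => y i) :=
    fun i => (EuclideanSpace.proj i).continuous
  fun_prop

lemma Cconst_nonneg (d₁ d₂ : ℕ) (y : EuclideanSpace ℝ (Fin 5)) (hd₁ : 2 ≤ d₁) (hd₂ : 2 ≤ d₂) :
    0 ≤ Cconst d₁ d₂ y := by
  have hA : (0:ℝ) < (d₁:ℝ) := by exact_mod_cast Nat.lt_of_lt_of_le Nat.zero_lt_two hd₁
  have hB : (0:ℝ) < (d₂:ℝ) := by exact_mod_cast Nat.lt_of_lt_of_le Nat.zero_lt_two hd₂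
  unfold Cconst
  positivity

lemma ftc_cont {f : ℝ → ℝ} (hf : Continuous f) (u : ℝ) :
    HasDerivAt (fun v => ∫ s in (0:ℝ)..v, f s) (f u) u :=
  intervalIntegral.integral_hasDerivAt_right (hf.intervalIntegrable _ _)
    (hf.stronglyMeasurable.stronglyMeasurableAtFilter) hf.continuousAt

/-- Grönwall-type bound for the inhomogeneous linearised equation
`μ' = (1/t) L μ + 2 B(η̂, μ) + F`, `μ(0) = 0`: if `∫₀^{t*} (4 C(d₁,d₂,η̂) + 1) ≤ 500`, then
`sup_{[0,t*]} |μ| ≤ e²⁵⁰ ‖F‖_{L²}`. -/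
theorem linearised_gronwall_bound
    (d₁ d₂ : ℕ) (hd₁ : 2 ≤ d₁) (hd₂ : 2 ≤ d₂)
    (tstar : ℝ) (h0 : 0 < tstar)
    (ηhat : ℝ → EuclideanSpace ℝ (Fin 5))
    (hηc : ContinuousOn ηhat (Set.Icc 0 tstar))
    (hint : (∫ s in (0:ℝ)..tstar, (4 * Cconst d₁ d₂ (ηhat s) + 1)) ≤ 500)
    (F μ : ℝ → EuclideanSpace ℝ (Fin 5))
    (hF : ContinuousOn F (Set.Icc 0 tstar))
    (hμc : ContinuousOn μ (Set.Icc 0 tstar)) (hμ0 : μ 0 = 0)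
    (hode : ∀ t ∈ Set.Ioc 0 tstar,
      HasDerivWithinAt μ
        ((1/t) • Lop d₁ d₂ (μ t) + (2:ℝ) • Bmap d₁ d₂ (ηhat t) (μ t) + F t)
        (Set.Icc 0 tstar) t) :
    ∀ t ∈ Set.Icc 0 tstar,
      ‖μ t‖ ≤ Real.exp 250 * Real.sqrt (∫ s in (0:ℝ)..tstar, ‖F s‖ ^ 2) := by
  intro t ht
  -- the clamp map onto [0, tstar]
  set π : ℝ → ℝ := fun s => max 0 (min s tstar) with hπdef
  have hπcont : Continuous π := continuous_const.max (continuous_id.min continuous_const)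
  have hπmem : ∀ s, π s ∈ Set.Icc 0 tstar :=
    fun s => ⟨le_max_left _ _, max_le h0.le (min_le_right _ _)⟩
  have hπid : ∀ s ∈ Set.Icc 0 tstar, π s = s := fun s hs => by
    simp only [hπdef]
    rw [min_eq_left hs.2, max_eq_right hs.1]
  have hηπ : Continuous (fun s => ηhat (π s)) := by
    rw [← continuousOn_univ]
    exact hηc.comp hπcont.continuousOn (fun s _ => hπmem s)
  have hFπ : Continuous (fun s => F (π s)) := by
    rw [← continuousOn_univ]
    exact hF.comp hπcont.continuousOn (fun s _ => hπmem s)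
  -- coefficient functions
  set a : ℝ → ℝ := fun s => 4 * Cconst d₁ d₂ (ηhat (π s)) + 1 with hadef
  set bb : ℝ → ℝ := fun s => ‖F (π s)‖^2 with hbbdef
  have hacont : Continuous a := by
    exact (continuous_const.mul ((Cconst_cont d₁ d₂).comp hηπ)).add continuous_const
  have hbbcont : Continuous bb := (hFπ.norm).pow 2
  have ha0 : ∀ s, 0 ≤ a s := fun s => by
    have := Cconst_nonneg d₁ d₂ (ηhat (π s)) hd₁ hd₂
    simp only [hadef]; linarith
  have hbb0 : ∀ s, 0 ≤ bb s := fun s => sq_nonneg _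
  set A : ℝ → ℝ := fun u => ∫ s in (0:ℝ)..u, a s with hAdef
  have hAderiv : ∀ u, HasDerivAt A (a u) u := fun u => ftc_cont hacont u
  have hAcont : Continuous A := continuous_iff_continuousAt.mpr
    (fun u => (hAderiv u).continuousAt)
  have hA0 : ∀ s, 0 ≤ s → 0 ≤ A s := fun s hs =>
    intervalIntegral.integral_nonneg hs (fun u _ => ha0 u)
  set w : ℝ → ℝ := fun s => bb s * Real.exp (-(A s)) with hwdef
  have hwcont : Continuous w := hbbcont.mul (Real.continuous_exp.comp hAcont.neg)
  have hw0 : ∀ s, 0 ≤ w s := fun s => mul_nonneg (hbb0 s) (Real.exp_pos _).le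
  set P : ℝ → ℝ := fun u => ∫ s in (0:ℝ)..u, w s with hPdef
  have hPderiv : ∀ u, HasDerivAt P (w u) u := fun u => ftc_cont hwcont u
  have hPcont : Continuous P := continuous_iff_continuousAt.mpr
    (fun u => (hPderiv u).continuousAt)
  -- the energy function and the Gronwall auxiliary function
  set g : ℝ → ℝ := fun s => ⟪μ s, μ s⟫ with hgdef
  have hgcont : ContinuousOn g (Set.Icc 0 tstar) := hμc.inner hμc
  set h : ℝ → ℝ := fun s => g s * Real.exp (-(A s)) - P s with hhdef
  have hhcont : ContinuousOn h (Set.Icc 0 tstar) :=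
    (hgcont.mul (Real.continuous_exp.comp hAcont.neg).continuousOn).sub hPcont.continuousOn
  -- derivative of h on the interior
  have hderiv : ∀ s ∈ Set.Ioo (0:ℝ) tstar, HasDerivAt h
      ((⟪μ s, ((1/s) • Lop d₁ d₂ (μ s) + (2:ℝ) • Bmap d₁ d₂ (ηhat s) (μ s) + F s)⟫
        + ⟪((1/s) • Lop d₁ d₂ (μ s) + (2:ℝ) • Bmap d₁ d₂ (ηhat s) (μ s) + F s), μ s⟫)
        * Real.exp (-(A s)) + g s * (Real.exp (-(A s)) * -(a s)) - w s) s := by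
    intro s hs
    have hsmem : Set.Icc (0:ℝ) tstar ∈ nhds s := Icc_mem_nhds hs.1 hs.2
    have hμs : HasDerivAt μ _ s := (hode s ⟨hs.1, hs.2.le⟩).hasDerivAt hsmem
    have hgd : HasDerivAt g _ s := hμs.inner ℝ hμs
    have hexp : HasDerivAt (fun u => Real.exp (-(A u))) (Real.exp (-(A s)) * -(a s)) s := by
      simpa using ((hAderiv s).neg).exp
    exact (hgd.mul hexp).sub (hPderiv s)
  have hderiv_le : ∀ s ∈ Set.Ioo (0:ℝ) tstar, deriv h s ≤ 0 := by
    intro s hs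
    rw [(hderiv s hs).deriv]
    have hμIcc : s ∈ Set.Icc (0:ℝ) tstar := ⟨hs.1.le, hs.2.le⟩
    set v := (1/s) • Lop d₁ d₂ (μ s) + (2:ℝ) • Bmap d₁ d₂ (ηhat s) (μ s) + F s with hvdef
    have hinner : ⟪μ s, v⟫ + ⟪v, μ s⟫ = 2 * ⟪v, μ s⟫ := by
      rw [real_inner_comm (μ s) v]; ring
    have hLv : ⟪v, μ s⟫ = (1/s) * ⟪Lop d₁ d₂ (μ s), μ s⟫
        + 2 * ⟪Bmap d₁ d₂ (ηhat s) (μ s), μ s⟫ + ⟪F s, μ s⟫ := by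
      simp only [hvdef, inner_add_left, real_inner_smul_left]
    have hL := inner_L_nonpos d₁ d₂ hd₂ (μ s)
    have hBle := inner_B_le d₁ d₂ hd₁ hd₂ (ηhat s) (μ s)
    have hFle : ⟪F s, μ s⟫ ≤ (‖F s‖^2 + ‖μ s‖^2) / 2 := by
      have h1 := real_inner_le_norm (F s) (μ s)
      nlinarith [sq_nonneg (‖F s‖ - ‖μ s‖)]
    have hgs : g s = ‖μ s‖^2 := real_inner_self_eq_norm_sq (μ s)
    have has : a s = 4 * Cconst d₁ d₂ (ηhat s) + 1 := by
      simp only [hadef, hπid s hμIcc]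
    have hbbs : bb s = ‖F s‖^2 := by simp only [hbbdef, hπid s hμIcc]
    have hws : w s = bb s * Real.exp (-(A s)) := rfl
    have hexp_pos : 0 < Real.exp (-(A s)) := Real.exp_pos _
    have hsinv : 0 ≤ 1/s := one_div_nonneg.mpr hs.1.le
    have hmain : ⟪μ s, v⟫ + ⟪v, μ s⟫ ≤ a s * g s + bb s := by
      rw [hinner, hLv, has, hbbs, hgs]
      have hLterm : (1/s) * ⟪Lop d₁ d₂ (μ s), μ s⟫ ≤ 0 :=
        mul_nonpos_of_nonneg_of_nonpos hsinv hL
      rw [real_inner_self_eq_norm_sq (μ s)] at hBle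
      nlinarith [hBle, hFle, hLterm]
    rw [hws]
    nlinarith [hmain, hexp_pos]
  -- h is antitone on [0, tstar]
  have hmono : AntitoneOn h (Set.Icc 0 tstar) := by
    apply antitoneOn_of_deriv_nonpos (convex_Icc _ _) hhcont
    · rw [interior_Icc]
      exact fun s hs => (hderiv s hs).differentiableAt.differentiableWithinAt
    · rw [interior_Icc]
      exact hderiv_le
  have hh0 : h 0 = 0 := by
    simp [hhdef, hgdef, hPdef, hμ0, intervalIntegral.integral_same]
  have hht : h t ≤ 0 := by
    rw [← hh0]
    exact hmono (Set.left_mem_Icc.mpr h0.le) ht ht.1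
  -- conclude : g t ≤ exp (A t) * P t
  set J := ∫ s in (0:ℝ)..tstar, ‖F s‖^2 with hJdef
  have hJ0 : 0 ≤ J := intervalIntegral.integral_nonneg h0.le (fun u _ => sq_nonneg _)
  have hbbJ : (∫ s in (0:ℝ)..tstar, bb s) = J := by
    apply intervalIntegral.integral_congr
    intro s hs
    rw [Set.uIcc_of_le h0.le] at hs
    simp only [hbbdef, hπid s hs]
  have hPt : P t ≤ J := by
    have h1 : P t ≤ ∫ s in (0:ℝ)..t, bb s := by
      apply intervalIntegral.integral_mono_on ht.1
        (hwcont.intervalIntegrable _ _) (hbbcont.intervalIntegrable _ _)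
      intro s hs
      have hAs : 0 ≤ A s := hA0 s hs.1
      have : Real.exp (-(A s)) ≤ 1 := Real.exp_le_one_iff.mpr (by linarith)
      calc bb s * Real.exp (-(A s)) ≤ bb s * 1 :=
        mul_le_mul_of_nonneg_left this (hbb0 s)
      _ = bb s := mul_one _
    have h2 : (∫ s in (0:ℝ)..t, bb s) ≤ ∫ s in (0:ℝ)..tstar, bb s := by
      have hsplit := intervalIntegral.integral_add_adjacent_intervals
        (hbbcont.intervalIntegrable (μ := MeasureTheory.volume) 0 t) (hbbcont.intervalIntegrable t tstar)
      have h3 : 0 ≤ ∫ s in t..tstar, bb s :=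
        intervalIntegral.integral_nonneg ht.2 (fun u _ => hbb0 u)
      linarith
    rw [hbbJ] at h2
    linarith
  have hPt0 : 0 ≤ P t := intervalIntegral.integral_nonneg ht.1 (fun u _ => hw0 u)
  have hAt : A t ≤ 500 := by
    have h2 : A t ≤ A tstar := by
      have hsplit := intervalIntegral.integral_add_adjacent_intervals
        (hacont.intervalIntegrable (μ := MeasureTheory.volume) 0 t) (hacont.intervalIntegrable t tstar)
      have h3 : 0 ≤ ∫ s in t..tstar, a s :=
        intervalIntegral.integral_nonneg ht.2 (fun u _ => ha0 u)
      simp only [hAdef]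
      linarith [hsplit]
    have h4 : A tstar = ∫ s in (0:ℝ)..tstar, (4 * Cconst d₁ d₂ (ηhat s) + 1) := by
      apply intervalIntegral.integral_congr
      intro s hs
      rw [Set.uIcc_of_le h0.le] at hs
      simp only [hadef, hπid s hs]
    linarith [hint, h4 ▸ h2]
  have hgt : g t ≤ Real.exp 500 * J := by
    have h5 : g t * Real.exp (-(A t)) ≤ P t := by
      have := hht; simp only [hhdef] at this; linarith
    have h6 : g t = (g t * Real.exp (-(A t))) * Real.exp (A t) := by
      rw [mul_assoc, ← Real.exp_add]; simp
    have h7 : Real.exp (A t) ≤ Real.exp 500 := Real.exp_le_exp.mpr hAt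
    calc g t = (g t * Real.exp (-(A t))) * Real.exp (A t) := h6
    _ ≤ P t * Real.exp (A t) := by
        apply mul_le_mul_of_nonneg_right h5 (Real.exp_pos _).le
    _ ≤ J * Real.exp 500 := mul_le_mul hPt h7 (Real.exp_pos _).le hJ0
    _ = Real.exp 500 * J := mul_comm _ _
  -- final: take square roots
  have hgnorm : ‖μ t‖^2 = g t := (real_inner_self_eq_norm_sq (μ t)).symm
  have hsq : (Real.exp 250 * Real.sqrt J)^2 = Real.exp 500 * J := by
    rw [mul_pow, Real.sq_sqrt hJ0, pow_two, ← Real.exp_add]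
    norm_num
  have hfin : ‖μ t‖^2 ≤ (Real.exp 250 * Real.sqrt J)^2 := by
    rw [hsq, hgnorm]; exact hgt
  have := Real.sqrt_le_sqrt hfin
  rwa [Real.sqrt_sq (norm_nonneg _),
    Real.sqrt_sq (by positivity : (0:ℝ) ≤ Real.exp 250 * Real.sqrt J)] at this
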